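/- arXiv:1612.06103 — 2 statements merged into one kernel-verified Lean document; each statement's English description precedes it below -/
import Mathlib

section
/- Let λ be an orthogonal partition of 2n. Then λ_{2j−1} ≡ λ_{2j} (mod 2) for every j ≥ 1 (i.e. λ is special) if and only if the transpose ^tλ is a symplectic partition of 2n. -/
open Classical

namespace Wald

/-- `S f k = λ_1 + … + λ_k` (partitions are indexed from 1; index 0 is unused). -/
def S (f : ℕ → ℕ) (k : ℕ) : ℕ := ∑ j ∈ Finset.Icc 1 k, f j

/-- `f` represents a partition of `N`: nonincreasing on indices `≥ 1`,
finitely many nonzero terms, with total sum `N`. -/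
structure IsPartition (f : ℕ → ℕ) (N : ℕ) : Prop where
  mono : ∀ ⦃j k : ℕ⦄, 1 ≤ j → j ≤ k → f k ≤ f j
  fin : ∃ m, ∀ j, m < j → f j = 0
  total : ∀ m, (∀ j, m < j → f j = 0) → S f m = N

/-- multiplicity of `i` as a term of the partition -/
noncomputable def mult (f : ℕ → ℕ) (i : ℕ) : ℕ := Set.ncard {j : ℕ | 1 ≤ j ∧ f j = i}

/-- dominance order: `Dom f g ↔ f ≤ g` -/
def Dom (f g : ℕ → ℕ) : Prop := ∀ k, S f k ≤ S g k

/-- transposed partition: `(transpose f) j = #{i ≥ 1 : f i ≥ j}` for `j ≥ 1` -/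
noncomputable def transpose (f : ℕ → ℕ) : ℕ → ℕ :=
  fun j => Set.ncard {i : ℕ | 1 ≤ i ∧ 1 ≤ j ∧ j ≤ f i}

/-- union of two partitions (all terms listed together in nonincreasing order);
it is characterized by `transpose (unionP f g) = transpose f + transpose g`. -/
noncomputable def unionP (f g : ℕ → ℕ) : ℕ → ℕ :=
  transpose (fun j => transpose f j + transpose g j)

/-- the partition `(1)` -/
def one1 : ℕ → ℕ := fun j => if j = 1 then 1 else 0

/-- symplectic partition: every odd `i ≥ 1` has even multiplicity -/
def Symp (f : ℕ → ℕ) : Prop := ∀ i, Odd i → Even (mult f i)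

/-- orthogonal partition: every even `i ≥ 2` has even multiplicity -/
def Orth (f : ℕ → ℕ) : Prop := ∀ i, Even i → 1 ≤ i → Even (mult f i)

/-- `λ_{2j-1} ≡ λ_{2j} (mod 2)` for all `j ≥ 1` (speciality for symplectic
partitions of `2n` and orthogonal partitions of `2n`). -/
def SpecialPairs (f : ℕ → ℕ) : Prop := ∀ j, 1 ≤ j → f (2*j - 1) % 2 = f (2*j) % 2

/-- speciality for orthogonal partitions of `2n+1`: `λ_1` odd and
`λ_{2j} ≡ λ_{2j+1} (mod 2)` for all `j ≥ 1`. -/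
def SpecialOrthOdd (f : ℕ → ℕ) : Prop :=
  Odd (f 1) ∧ ∀ j, 1 ≤ j → f (2*j) % 2 = f (2*j + 1) % 2

/-- `Jord_bp` for symplectic partitions: even `i ≥ 2` with positive multiplicity -/
def JordbpS (f : ℕ → ℕ) : Set ℕ := {i | Even i ∧ 2 ≤ i ∧ 1 ≤ mult f i}

/-- `Jord_bp` for orthogonal partitions: odd `i ≥ 1` with positive multiplicity -/
def JordbpO (f : ℕ → ℕ) : Set ℕ := {i | Odd i ∧ 1 ≤ mult f i}

/-- the set `{i_1 > … > i_m}` of terms with odd multiplicity -/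
def OddSet (f : ℕ → ℕ) : Set ℕ := {i | Odd (mult f i)}

/-- for special symplectic partitions: `{i_1 > … > i_{m'}}`, with `0` added if `m` is odd -/
def Dsymp (f : ℕ → ℕ) : Set ℕ :=
  {i | Odd (mult f i) ∨ (i = 0 ∧ Odd (OddSet f).ncard)}

/-- `a = i_{2h-1}` and `b = i_{2h}` for some `h`: consecutive elements of `Dsymp f`
with an even number of elements of `Dsymp f` above `a`. -/
def PairedS (f : ℕ → ℕ) (a b : ℕ) : Prop :=
  b < a ∧ a ∈ Dsymp f ∧ b ∈ Dsymp f ∧ Even ((Dsymp f ∩ Set.Ioi a).ncard) ∧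
    Dsymp f ∩ Set.Ioo b a = ∅

/-- intervals of a special symplectic partition of `2n` -/
def IsIntervalS (f : ℕ → ℕ) (Δ : Set ℕ) : Prop :=
  (∃ a b, PairedS f a b ∧ Δ = {i | (i = 0 ∨ 1 ≤ mult f i) ∧ b ≤ i ∧ i ≤ a}) ∨
  (∃ i, Even i ∧ (i = 0 ∨ (2 ≤ i ∧ 1 ≤ mult f i)) ∧
    (¬ ∃ a b, PairedS f a b ∧ b ≤ i ∧ i ≤ a) ∧ Δ = {i})

/-- `a = i_{2h-1}` and `b = i_{2h}` for some `h` (orthogonal partitions of `2n`) -/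
def PairedOE (f : ℕ → ℕ) (a b : ℕ) : Prop :=
  b < a ∧ a ∈ OddSet f ∧ b ∈ OddSet f ∧ Even ((OddSet f ∩ Set.Ioi a).ncard) ∧
    OddSet f ∩ Set.Ioo b a = ∅

/-- intervals of a special orthogonal partition of `2n` -/
def IsIntervalOE (f : ℕ → ℕ) (Δ : Set ℕ) : Prop :=
  (∃ a b, PairedOE f a b ∧ Δ = {i | 1 ≤ mult f i ∧ b ≤ i ∧ i ≤ a}) ∨
  (∃ i, Odd i ∧ 1 ≤ mult f i ∧ (¬ ∃ a b, PairedOE f a b ∧ b ≤ i ∧ i ≤ a) ∧ Δ = {i})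

/-- `a = i_{2h}` and `b = i_{2h+1}` for some `h ≥ 1` (orthogonal partitions of `2n+1`) -/
def PairedOO (f : ℕ → ℕ) (a b : ℕ) : Prop :=
  b < a ∧ a ∈ OddSet f ∧ b ∈ OddSet f ∧ Odd ((OddSet f ∩ Set.Ioi a).ncard) ∧
    OddSet f ∩ Set.Ioo b a = ∅

/-- intervals of a special orthogonal partition of `2n+1` (convention `i_0 = ∞`) -/
def IsIntervalOO (f : ℕ → ℕ) (Δ : Set ℕ) : Prop :=
  (∃ b, b ∈ OddSet f ∧ OddSet f ∩ Set.Ioi b = ∅ ∧ Δ = {i | 1 ≤ mult f i ∧ b ≤ i}) ∨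
  (∃ a b, PairedOO f a b ∧ Δ = {i | 1 ≤ mult f i ∧ b ≤ i ∧ i ≤ a}) ∨
  (∃ i, Odd i ∧ 1 ≤ mult f i ∧
    (¬ ((∃ b, b ∈ OddSet f ∧ OddSet f ∩ Set.Ioi b = ∅ ∧ b ≤ i) ∨
        (∃ a b, PairedOO f a b ∧ b ≤ i ∧ i ≤ a))) ∧ Δ = {i})

/-- `J(Δ) = {j ≥ 1 : λ_j ∈ Δ}` -/
def Jset (f : ℕ → ℕ) (Δ : Set ℕ) : Set ℕ := {j | 1 ≤ j ∧ f j ∈ Δ}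

/-- `ζ(λ)` for a special symplectic partition (`j_max(Δ_min) = ∞`, so the smallest
interval contributes no `-1`: its `J`-set has no greatest element). -/
noncomputable def zetaS (f : ℕ → ℕ) : ℕ → ℤ := fun j =>
  if ∃ Δ, IsIntervalS f Δ ∧ IsLeast (Jset f Δ) j then 1
  else if ∃ Δ, IsIntervalS f Δ ∧ IsGreatest (Jset f Δ) j then -1
  else 0

/-- `ζ(λ)` for a special orthogonal partition of `2n` -/
noncomputable def zetaOE (f : ℕ → ℕ) : ℕ → ℤ := fun j =>
  if ∃ Δ, IsIntervalOE f Δ ∧ IsLeast (Jset f Δ) j then 1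
  else if ∃ Δ, IsIntervalOE f Δ ∧ IsGreatest (Jset f Δ) j then -1
  else 0

/-- `J^+` for `λ1` special symplectic and `λ2` special orthogonal (of `2n2`) -/
def JplusSet (f1 f2 : ℕ → ℕ) : Set ℕ :=
  {j | 1 ≤ j ∧ Even (f1 j) ∧ Odd (f2 j) ∧
    ((∃ Δ, IsIntervalS f1 Δ ∧ IsLeast (Jset f1 Δ) j) ∨
     (∃ Δ, IsIntervalOE f2 Δ ∧ IsLeast (Jset f2 Δ) j))}

/-- `J^-` -/
def JminusSet (f1 f2 : ℕ → ℕ) : Set ℕ :=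
  {j | 1 ≤ j ∧ Even (f1 j) ∧ Odd (f2 j) ∧
    ((∃ Δ, IsIntervalS f1 Δ ∧ IsGreatest (Jset f1 Δ) j) ∨
     (∃ Δ, IsIntervalOE f2 Δ ∧ IsGreatest (Jset f2 Δ) j))}

/-- the sequence `ξ` -/
noncomputable def xi (f1 f2 : ℕ → ℕ) : ℕ → ℤ := fun j =>
  if j ∈ JplusSet f1 f2 then 1 else if j ∈ JminusSet f1 f2 then -1 else 0

/-- partial sums of an integer-valued sequence indexed from 1 -/
def Sz (f : ℕ → ℤ) (k : ℕ) : ℤ := ∑ j ∈ Finset.Icc 1 k, f j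

/-- `g` is the greatest orthogonal partition of `N` which is dominated by the
sequence `t` (used to define the Spaltenstein-type duality `d`). -/
def IsDualOf (g : ℕ → ℕ) (N : ℕ) (t : ℕ → ℕ) : Prop :=
  (IsPartition g N ∧ Orth g ∧ Dom g t) ∧
  ∀ ν, IsPartition ν N → Orth ν → Dom ν t → Dom ν g

/-- `g = d(f)` for `f` a symplectic partition of `2m`: the greatest orthogonal
partition of `2m+1` dominated by `^t(f ∪ (1))`. -/
def IsSympDual (g : ℕ → ℕ) (m : ℕ) (f : ℕ → ℕ) : Prop :=
  IsDualOf g (2*m+1) (transpose (unionP f one1))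

/-- `g = d(f)` for `f` an orthogonal partition of `2m`: the greatest orthogonal
partition of `2m` dominated by `^tf`. -/
def IsOrthDual (g : ℕ → ℕ) (m : ℕ) (f : ℕ → ℕ) : Prop :=
  IsDualOf g (2*m) (transpose f)

section Aux

variable {f : ℕ → ℕ}

lemma transpose_eq {m : ℕ} (hm : ∀ j, m < j → f j = 0) {j : ℕ} (hj : 1 ≤ j) :
    transpose f j = ((Finset.Icc 1 m).filter (fun i => j ≤ f i)).card := by
  rw [transpose, show {i : ℕ | 1 ≤ i ∧ 1 ≤ j ∧ j ≤ f i}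
      = ↑((Finset.Icc 1 m).filter (fun i => j ≤ f i)) from ?_, Set.ncard_coe_finset]
  ext i
  simp only [Finset.coe_filter, Finset.mem_Icc, Set.mem_setOf_eq]
  constructor
  · rintro ⟨h1, _, h3⟩
    refine ⟨⟨h1, ?_⟩, h3⟩
    by_contra h
    have := hm i (by omega)
    omega
  · rintro ⟨⟨h1, _⟩, h3⟩
    exact ⟨h1, hj, h3⟩

lemma galois {m : ℕ} (hmono : ∀ ⦃j k : ℕ⦄, 1 ≤ j → j ≤ k → f k ≤ f j)
    (hm : ∀ j, m < j → f j = 0) {i j : ℕ} (hi : 1 ≤ i) (hj : 1 ≤ j) :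
    j ≤ f i ↔ i ≤ transpose f j := by
  rw [transpose_eq hm hj]
  constructor
  · intro h
    have him : i ≤ m := by
      by_contra hc; have := hm i (by omega); omega
    have hsub : Finset.Icc 1 i ⊆ (Finset.Icc 1 m).filter (fun k => j ≤ f k) := by
      intro k hk
      simp only [Finset.mem_Icc, Finset.mem_filter] at *
      exact ⟨⟨hk.1, hk.2.trans him⟩, le_trans h (hmono hk.1 hk.2)⟩
    have := Finset.card_le_card hsub
    simpa using this
  · intro h
    by_contra hc
    push_neg at hc
    have hsub : (Finset.Icc 1 m).filter (fun k => j ≤ f k) ⊆ Finset.Ico 1 i := by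
      intro k hk
      simp only [Finset.mem_Icc, Finset.mem_filter, Finset.mem_Ico] at *
      refine ⟨hk.1.1, ?_⟩
      by_contra hki
      have := hmono hi (by omega : i ≤ k)
      omega
    have := Finset.card_le_card hsub
    simp [Nat.card_Ico] at this
    omega

lemma mult_transpose {m : ℕ} (hmono : ∀ ⦃j k : ℕ⦄, 1 ≤ j → j ≤ k → f k ≤ f j)
    (hm : ∀ j, m < j → f j = 0) {i : ℕ} (hi : 1 ≤ i) :
    mult (transpose f) i = f i - f (i+1) := by
  have hset : {j : ℕ | 1 ≤ j ∧ transpose f j = i} = ↑(Finset.Ioc (f (i+1)) (f i)) := by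
    ext j
    simp only [Set.mem_setOf_eq, Finset.coe_Ioc, Set.mem_Ioc]
    constructor
    · rintro ⟨hj, hje⟩
      have h1 : j ≤ f i := (galois hmono hm hi hj).2 (by omega)
      have h2 : ¬ j ≤ f (i+1) := fun hc => by
        have := (galois hmono hm (by omega : 1 ≤ i+1) hj).1 hc; omega
      exact ⟨by omega, h1⟩
    · rintro ⟨h1, h2⟩
      have hj : 1 ≤ j := by omega
      have ha : i ≤ transpose f j := (galois hmono hm hi hj).1 h2
      have hb : ¬ (i+1 ≤ transpose f j) := fun hc => by
        have := (galois hmono hm (by omega : 1 ≤ i+1) hj).2 hc; omega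
      exact ⟨hj, by omega⟩
  rw [mult, hset, Set.ncard_coe_finset, Nat.card_Ioc]

lemma transpose_isPartition {N : ℕ} (hpart : IsPartition f N) :
    IsPartition (transpose f) N := by
  obtain ⟨m, hm⟩ := hpart.fin
  constructor
  · intro j k hj hjk
    rw [transpose_eq hm hj, transpose_eq hm (hj.trans hjk)]
    apply Finset.card_le_card
    intro x hx
    simp only [Finset.mem_filter] at *
    exact ⟨hx.1, hjk.trans hx.2⟩
  · refine ⟨f 1, fun j hj => ?_⟩
    rw [transpose_eq hm (by omega), Finset.card_eq_zero, Finset.filter_eq_empty_iff]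
    intro i hi
    simp only [Finset.mem_Icc] at hi
    have := hpart.mono le_rfl hi.1
    omega
  · intro M hM
    have hf1M : f 1 ≤ M := by
      by_contra hc
      push_neg at hc
      have h0 := hM (f 1) hc
      rw [transpose_eq hm (by omega), Finset.card_eq_zero,
        Finset.filter_eq_empty_iff] at h0
      have h1m : 1 ≤ m := by
        by_contra h; have := hm 1 (by omega); omega
      exact absurd le_rfl (h0 (by simp [Finset.mem_Icc]; omega))
    have key : S (transpose f) M = ∑ i ∈ Finset.Icc 1 m, f i := by
      rw [S, Finset.sum_congr rfl
        (fun j hj => transpose_eq hm (Finset.mem_Icc.mp hj).1)]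
      calc ∑ j ∈ Finset.Icc 1 M, ((Finset.Icc 1 m).filter (fun i => j ≤ f i)).card
          = ∑ j ∈ Finset.Icc 1 M, ∑ i ∈ Finset.Icc 1 m,
              (if j ≤ f i then 1 else 0) := by
            exact Finset.sum_congr rfl fun j _ => Finset.card_filter _ _
        _ = ∑ i ∈ Finset.Icc 1 m, ∑ j ∈ Finset.Icc 1 M,
              (if j ≤ f i then 1 else 0) := Finset.sum_comm
        _ = ∑ i ∈ Finset.Icc 1 m, f i := by
            apply Finset.sum_congr rfl
            intro i hi
            simp only [Finset.mem_Icc] at hi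
            have hfi : f i ≤ M := le_trans (hpart.mono le_rfl hi.1) hf1M
            rw [← Finset.card_filter]
            have he : (Finset.Icc 1 M).filter (fun j => j ≤ f i)
                = Finset.Icc 1 (f i) := by
              ext j; simp only [Finset.mem_Icc, Finset.mem_filter]; omega
            rw [he, Nat.card_Icc]
            omega
    rw [key]
    exact hpart.total m hm

end Aux

/-- An orthogonal partition of `2n` is special iff its transpose is symplectic. -/
theorem stmt10 (n : ℕ) (f : ℕ → ℕ) (hpart : IsPartition f (2*n)) (horth : Orth f) :
    SpecialPairs f ↔ (IsPartition (transpose f) (2*n) ∧ Symp (transpose f)) := by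
  obtain ⟨m, hm⟩ := hpart.fin
  have hmono := hpart.mono
  have hmult : ∀ i, 1 ≤ i → mult (transpose f) i = f i - f (i+1) :=
    fun i hi => mult_transpose hmono hm hi
  constructor
  · intro hsp
    refine ⟨transpose_isPartition hpart, ?_⟩
    intro i hodd
    obtain ⟨k, rfl⟩ := hodd
    rw [hmult _ (by omega)]
    have hle : f (2*k+1+1) ≤ f (2*k+1) := hmono (by omega) (by omega)
    have hs := hsp (k+1) (by omega)
    have e1 : 2*(k+1)-1 = 2*k+1 := by omega
    have e2 : 2*(k+1) = 2*k+1+1 := by omega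
    rw [e1, e2] at hs
    rw [Nat.even_sub hle, Nat.even_iff, Nat.even_iff]
    omega
  · rintro ⟨_, hsymp⟩ j hj
    have hodd : Odd (2*j-1) := ⟨j-1, by omega⟩
    have hs := hsymp _ hodd
    rw [hmult _ (by omega)] at hs
    have hle : f (2*j-1+1) ≤ f (2*j-1) := hmono (by omega) (by omega)
    rw [Nat.even_sub hle, Nat.even_iff, Nat.even_iff] at hs
    have e : 2*j-1+1 = 2*j := by omega
    rw [e] at hs
    omega

end Wald
end

section
/- Let λ be a special symplectic partition of 2n. Then every interval of λ consists of even integers, and the intervals of λ form a partition of the set Jord_bp(λ) ∪ {0}: they are pairwise disjoint, nonempty, and their union is Jord_bp(λ) ∪ {0}. -/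
open Classical

namespace Wald

section AuxStmt11

/-- number of positions `j ∈ [1,M]` with `f j > i` -/
noncomputable def NfAux (f : ℕ → ℕ) (M i : ℕ) : ℕ :=
  ((Finset.Icc 1 M).filter (fun j => i < f j)).card

lemma filter_icc_down (M : ℕ) (p : ℕ → Prop) [DecidablePred p]
    (hp : ∀ j k : ℕ, 1 ≤ j → j ≤ k → p k → p j) :
    (Finset.Icc 1 M).filter p = Finset.Icc 1 ((Finset.Icc 1 M).filter p).card := by
  set s := (Finset.Icc 1 M).filter p with hs
  have hsub : Finset.Icc 1 s.card ⊆ s := by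
    intro j hj
    rw [Finset.mem_Icc] at hj
    by_contra hjs
    have h1 : s ⊆ Finset.Icc 1 (j - 1) := by
      intro k hk
      have hk' := Finset.mem_filter.mp hk
      have hk1 := Finset.mem_Icc.mp hk'.1
      have hjk : ¬ j ≤ k := by
        intro h
        exact hjs (Finset.mem_filter.mpr ⟨Finset.mem_Icc.mpr ⟨hj.1, le_trans h hk1.2⟩,
          hp j k hj.1 h hk'.2⟩)
      exact Finset.mem_Icc.mpr ⟨hk1.1, by omega⟩
    have h2 := Finset.card_le_card h1
    rw [Nat.card_Icc] at h2
    omega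
  have h3 : s.card ≤ (Finset.Icc 1 s.card).card := by rw [Nat.card_Icc]; omega
  exact (Finset.eq_of_subset_of_card_le hsub h3).symm

lemma lt_f_iff (f : ℕ → ℕ) (M : ℕ) (hM : ∀ j, M < j → f j = 0)
    (hmono : ∀ ⦃j k : ℕ⦄, 1 ≤ j → j ≤ k → f k ≤ f j) (i : ℕ) :
    ∀ j, 1 ≤ j → (i < f j ↔ j ≤ NfAux f M i) := by
  have key : (Finset.Icc 1 M).filter (fun j => i < f j) = Finset.Icc 1 (NfAux f M i) :=
    filter_icc_down M _ (fun j k h1 h2 hk => lt_of_lt_of_le hk (hmono h1 h2))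
  intro j hj
  constructor
  · intro hlt
    have hjM : j ≤ M := by
      by_contra h
      rw [hM j (by omega)] at hlt
      omega
    have hmem : j ∈ (Finset.Icc 1 M).filter (fun j => i < f j) :=
      Finset.mem_filter.mpr ⟨Finset.mem_Icc.mpr ⟨hj, hjM⟩, hlt⟩
    rw [key, Finset.mem_Icc] at hmem
    exact hmem.2
  · intro hle
    have hmem : j ∈ Finset.Icc 1 (NfAux f M i) := Finset.mem_Icc.mpr ⟨hj, hle⟩
    rw [← key, Finset.mem_filter] at hmem
    exact hmem.2

lemma mult_eq_card (f : ℕ → ℕ) (M : ℕ) (hM : ∀ j, M < j → f j = 0) (i : ℕ) (hi : 1 ≤ i) :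
    mult f i = ((Finset.Icc 1 M).filter (fun j => f j = i)).card := by
  unfold mult
  rw [← Set.ncard_coe_finset]
  congr 1
  ext j
  simp only [Finset.coe_filter, Finset.mem_Icc, Set.mem_setOf_eq]
  constructor
  · rintro ⟨h1, h2⟩
    have hjM : j ≤ M := by
      by_contra h
      rw [hM j (by omega)] at h2
      omega
    exact ⟨⟨h1, hjM⟩, h2⟩
  · rintro ⟨⟨h1, _⟩, h2⟩
    exact ⟨h1, h2⟩

lemma mult_zero' (f : ℕ → ℕ) (M : ℕ) (hM : ∀ j, M < j → f j = 0) : mult f 0 = 0 := by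
  unfold mult
  apply Set.Infinite.ncard
  exact (Set.Ioi_infinite M).mono (fun j hj => ⟨by exact Nat.one_le_iff_ne_zero.mpr (by
    have : M < j := hj; omega), hM j hj⟩)

lemma NfAux_step (f : ℕ → ℕ) (M : ℕ) (hM : ∀ j, M < j → f j = 0) (i : ℕ) :
    NfAux f M i = NfAux f M (i+1) + mult f (i+1) := by
  rw [mult_eq_card f M hM (i+1) (by omega)]
  unfold NfAux
  have hd : Disjoint ((Finset.Icc 1 M).filter (fun j => i+1 < f j))
      ((Finset.Icc 1 M).filter (fun j => f j = i+1)) := by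
    rw [Finset.disjoint_left]
    intro j hj1 hj2
    simp only [Finset.mem_filter] at hj1 hj2
    omega
  have hsplit : (Finset.Icc 1 M).filter (fun j => i < f j)
      = ((Finset.Icc 1 M).filter (fun j => i+1 < f j))
        ∪ ((Finset.Icc 1 M).filter (fun j => f j = i+1)) := by
    ext j
    simp only [Finset.mem_union, Finset.mem_filter, Finset.mem_Icc]
    omega
  rw [hsplit, Finset.card_union_of_disjoint hd]

lemma mult_pos_le (f : ℕ → ℕ) (hmono : ∀ ⦃j k : ℕ⦄, 1 ≤ j → j ≤ k → f k ≤ f j) (i : ℕ)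
    (hi : 1 ≤ mult f i) : i ≤ f 1 := by
  have h : ({j : ℕ | 1 ≤ j ∧ f j = i}).Nonempty := by
    apply Set.nonempty_of_ncard_ne_zero
    unfold mult at hi
    omega
  obtain ⟨j, hj1, hj2⟩ := h
  rw [← hj2]
  exact hmono le_rfl hj1

lemma NfAux_eq_sum (f : ℕ → ℕ) (M : ℕ) (hM : ∀ j, M < j → f j = 0)
    (hmono : ∀ ⦃j k : ℕ⦄, 1 ≤ j → j ≤ k → f k ≤ f j) (i : ℕ) :
    NfAux f M i = ∑ k ∈ Finset.Ioc i (f 1), mult f k := by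
  unfold NfAux
  have H : ∀ j ∈ (Finset.Icc 1 M).filter (fun j => i < f j), f j ∈ Finset.Ioc i (f 1) := by
    intro j hj
    rw [Finset.mem_filter] at hj
    rw [Finset.mem_Ioc]
    exact ⟨hj.2, hmono le_rfl (Finset.mem_Icc.mp hj.1).1⟩
  rw [Finset.card_eq_sum_card_fiberwise H]
  apply Finset.sum_congr rfl
  intro k hk
  rw [Finset.mem_Ioc] at hk
  rw [mult_eq_card f M hM k (by omega), Finset.filter_filter]
  congr 1
  ext j
  simp only [Finset.mem_filter, Finset.mem_Icc]
  constructor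
  · rintro ⟨h1, _, h3⟩
    exact ⟨h1, h3⟩
  · rintro ⟨h1, h2⟩
    exact ⟨h1, by omega, h2⟩

lemma even_NfAux_iff (f : ℕ → ℕ) (M : ℕ) (hM : ∀ j, M < j → f j = 0)
    (hmono : ∀ ⦃j k : ℕ⦄, 1 ≤ j → j ≤ k → f k ≤ f j) (i : ℕ) :
    Even (NfAux f M i) ↔ Even ((OddSet f ∩ Set.Ioi i).ncard) := by
  rw [NfAux_eq_sum f M hM hmono i, Finset.even_sum_iff_even_card_odd]
  have hset : OddSet f ∩ Set.Ioi i
      = ↑((Finset.Ioc i (f 1)).filter (fun k => Odd (mult f k))) := by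
    ext k
    simp only [Set.mem_inter_iff, Set.mem_Ioi, Finset.coe_filter, Set.mem_setOf_eq,
      Finset.mem_Ioc, OddSet]
    constructor
    · rintro ⟨hodd, hik⟩
      exact ⟨⟨hik, mult_pos_le f hmono k hodd.pos⟩, hodd⟩
    · rintro ⟨⟨hik, _⟩, hodd⟩
      exact ⟨hodd, hik⟩
  rw [hset, Set.ncard_coe_finset]

end AuxStmt11

section AuxStmt11b

lemma keyL (f : ℕ → ℕ) (M : ℕ) (hM : ∀ j, M < j → f j = 0)
    (hmono : ∀ ⦃j k : ℕ⦄, 1 ≤ j → j ≤ k → f k ≤ f j)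
    (hsymp : Symp f) (hspec : SpecialPairs f) :
    ∀ i, Odd i → 1 ≤ mult f i → Even (NfAux f M i) := by
  by_contra hcon
  push_neg at hcon
  obtain ⟨iw, hwodd, hwm, hwN⟩ := hcon
  set B := (Finset.Icc 1 (f 1)).filter
    (fun i => Odd i ∧ 1 ≤ mult f i ∧ ¬ Even (NfAux f M i)) with hBdef
  have hne : B.Nonempty := by
    refine ⟨iw, Finset.mem_filter.mpr ⟨Finset.mem_Icc.mpr
      ⟨hwodd.pos, mult_pos_le f hmono iw hwm⟩, hwodd, hwm, hwN⟩⟩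
  have hi0B := B.max'_mem hne
  set i0 := B.max' hne with hi0def
  rw [hBdef, Finset.mem_filter, Finset.mem_Icc] at hi0B
  obtain ⟨⟨hi01, hi0top⟩, hoddi0, hmi0, hNodd⟩ := hi0B
  set N := NfAux f M i0 with hNdef
  have hON : Odd N := Nat.not_even_iff_odd.mp hNodd
  obtain ⟨t, ht⟩ := hON
  have hNge1 : 1 ≤ N := by omega
  have hstep0 : NfAux f M (i0 - 1) = N + mult f i0 := by
    have h := NfAux_step f M hM (i0 - 1)
    rwa [show i0 - 1 + 1 = i0 by omega] at h
  have hub : f (N+1) ≤ i0 := by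
    by_contra h
    have := (lt_f_iff f M hM hmono i0 (N+1) (by omega)).mp (by omega)
    omega
  have hlb : i0 ≤ f (N+1) := by
    have h := (lt_f_iff f M hM hmono (i0-1) (N+1) (by omega)).mpr (by omega)
    omega
  have hfN1 : f (N+1) = i0 := le_antisymm hub hlb
  have hj := hspec (t+1) (by omega)
  rw [show 2*(t+1) - 1 = N by omega, show 2*(t+1) = N + 1 by omega, hfN1] at hj
  have hi0lt : i0 < f N := (lt_f_iff f M hM hmono i0 N hNge1).mpr le_rfl
  have hoddi1 : Odd (f N) := by
    rw [Nat.odd_iff] at hoddi0 ⊢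
    omega
  have hNM : N ≤ M := by
    by_contra h
    have := hM N (by omega)
    omega
  have hmi1 : 1 ≤ mult f (f N) := by
    rw [mult_eq_card f M hM (f N) (by omega)]
    exact Finset.card_pos.mpr ⟨N, Finset.mem_filter.mpr ⟨Finset.mem_Icc.mpr ⟨hNge1, hNM⟩, rfl⟩⟩
  have hstep1 : NfAux f M (f N - 1) = NfAux f M (f N) + mult f (f N) := by
    have h := NfAux_step f M hM (f N - 1)
    rwa [show f N - 1 + 1 = f N by omega] at h
  have hge : N ≤ NfAux f M (f N - 1) :=
    (lt_f_iff f M hM hmono (f N - 1) N hNge1).mp (by omega)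
  have hlt : ¬ (N + 1 ≤ NfAux f M (f N - 1)) := by
    intro h
    have := (lt_f_iff f M hM hmono (f N - 1) (N+1) (by omega)).mpr h
    omega
  have hevenm : Even (mult f (f N)) := hsymp (f N) hoddi1
  have hN1odd : ¬ Even (NfAux f M (f N)) := by
    rw [Nat.not_even_iff_odd, Nat.odd_iff]
    rw [Nat.even_iff] at hevenm
    omega
  have hmem : f N ∈ B := by
    rw [hBdef, Finset.mem_filter, Finset.mem_Icc]
    exact ⟨⟨by omega, hmono le_rfl hNge1⟩, hoddi1, hmi1, hN1odd⟩
  have := Finset.le_max' B (f N) hmem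
  omega

lemma mem_dsymp (f : ℕ → ℕ) (x : ℕ) :
    x ∈ Dsymp f ↔ Odd (mult f x) ∨ (x = 0 ∧ Odd (OddSet f).ncard) := Iff.rfl

lemma oddset_even (f : ℕ → ℕ) (hsymp : Symp f) : ∀ i ∈ OddSet f, Even i := by
  intro i hi
  rcases Nat.even_or_odd i with h | h
  · exact h
  · exact absurd (hsymp i h) (Nat.not_even_iff_odd.mpr hi)

lemma dsymp_even (f : ℕ → ℕ) (hsymp : Symp f) : ∀ i ∈ Dsymp f, Even i := by
  intro i hi
  rcases (mem_dsymp f i).mp hi with h | ⟨h0, _⟩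
  · exact oddset_even f hsymp i h
  · rw [h0]; exact Even.zero

lemma dsymp_finite (f : ℕ → ℕ) (hmono : ∀ ⦃j k : ℕ⦄, 1 ≤ j → j ≤ k → f k ≤ f j) :
    (Dsymp f).Finite := by
  apply Set.Finite.subset (Set.finite_Icc 0 (f 1))
  intro i hi
  rcases (mem_dsymp f i).mp hi with h | ⟨h0, _⟩
  · exact Set.mem_Icc.mpr ⟨Nat.zero_le i, mult_pos_le f hmono i h.pos⟩
  · exact Set.mem_Icc.mpr ⟨Nat.zero_le i, by rw [h0]; exact Nat.zero_le _⟩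

lemma dsymp_ioi (f : ℕ → ℕ) (c : ℕ) : Dsymp f ∩ Set.Ioi c = OddSet f ∩ Set.Ioi c := by
  ext x
  simp only [Set.mem_inter_iff, Set.mem_Ioi, Dsymp, OddSet, Set.mem_setOf_eq]
  constructor
  · rintro ⟨h | ⟨rfl, _⟩, hc⟩
    · exact ⟨h, hc⟩
    · exact absurd hc (Nat.not_lt_zero c)
  · rintro ⟨h, hc⟩
    exact ⟨Or.inl h, hc⟩

lemma paired_ioi_eq (f : ℕ → ℕ) (a b : ℕ) (h : PairedS f a b) :
    Dsymp f ∩ Set.Ioi b = insert a (Dsymp f ∩ Set.Ioi a) := by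
  obtain ⟨hlt, ha, hb, _, hgap⟩ := h
  ext x
  simp only [Set.mem_inter_iff, Set.mem_Ioi, Set.mem_insert_iff]
  constructor
  · rintro ⟨hx, hxb⟩
    rcases lt_trichotomy x a with h1 | h1 | h1
    · exfalso
      have hmem : x ∈ Dsymp f ∩ Set.Ioo b a := ⟨hx, hxb, h1⟩
      rw [hgap] at hmem
      exact hmem
    · exact Or.inl h1
    · exact Or.inr ⟨hx, h1⟩
  · rintro (rfl | ⟨hx, hxa⟩)
    · exact ⟨ha, hlt⟩
    · exact ⟨hx, lt_trans hlt hxa⟩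

lemma paired_count_odd (f : ℕ → ℕ) (hmono : ∀ ⦃j k : ℕ⦄, 1 ≤ j → j ≤ k → f k ≤ f j)
    (a b : ℕ) (h : PairedS f a b) :
    ¬ Even ((Dsymp f ∩ Set.Ioi b).ncard) := by
  have hfin : (Dsymp f ∩ Set.Ioi a).Finite := (dsymp_finite f hmono).inter_of_left _
  rw [paired_ioi_eq f a b h,
    Set.ncard_insert_of_notMem (fun hc => lt_irrefl a hc.2) hfin]
  rw [Nat.even_add_one, not_not]
  exact h.2.2.2.1

lemma pair_b_eq (f : ℕ → ℕ) (a b b' : ℕ) (h : PairedS f a b) (h' : PairedS f a b') :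
    b = b' := by
  rcases lt_trichotomy b b' with hlt | he | hlt
  · exfalso
    have hmem : b' ∈ Dsymp f ∩ Set.Ioo b a := ⟨h'.2.2.1, hlt, h'.1⟩
    rw [h.2.2.2.2] at hmem
    exact hmem
  · exact he
  · exfalso
    have hmem : b ∈ Dsymp f ∩ Set.Ioo b' a := ⟨h.2.2.1, hlt, h.1⟩
    rw [h'.2.2.2.2] at hmem
    exact hmem

lemma pair_sep (f : ℕ → ℕ) (hmono : ∀ ⦃j k : ℕ⦄, 1 ≤ j → j ≤ k → f k ≤ f j)
    (a b a' b' : ℕ) (h : PairedS f a b) (h' : PairedS f a' b') (hlt : a' < a) :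
    a' < b := by
  by_contra hc
  have hba' : b = a' := by
    rcases lt_or_eq_of_le (not_lt.mp hc) with h1 | h1
    · exfalso
      have hmem : a' ∈ Dsymp f ∩ Set.Ioo b a := ⟨h'.2.1, h1, hlt⟩
      rw [h.2.2.2.2] at hmem
      exact hmem
    · exact h1
  have h1 := paired_count_odd f hmono a b h
  rw [hba'] at h1
  exact h1 h'.2.2.2.1

end AuxStmt11b


/-- Section 1.3: the intervals of a special symplectic partition of `2n` consist
of even integers and form a partition of `Jord_bp(λ) ∪ {0}`. -/
theorem stmt11 (n : ℕ) (f : ℕ → ℕ)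
    (hpart : IsPartition f (2*n)) (hsymp : Symp f) (hspec : SpecialPairs f) :
    (∀ Δ, IsIntervalS f Δ → ∀ i ∈ Δ, Even i) ∧
    (∀ Δ, IsIntervalS f Δ → Δ.Nonempty) ∧
    (∀ Δ Δ', IsIntervalS f Δ → IsIntervalS f Δ' → Δ ≠ Δ' → Disjoint Δ Δ') ∧
    ⋃₀ {Δ | IsIntervalS f Δ} = JordbpS f ∪ {0} := by
  obtain ⟨M, hM⟩ := hpart.fin
  have hmono := hpart.mono
  have hkey := keyL f M hM hmono hsymp hspec
  have part1 : ∀ Δ, IsIntervalS f Δ → ∀ i ∈ Δ, Even i := by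
    intro Δ hΔ i hi
    rcases hΔ with ⟨a, b, hp, rfl⟩ | ⟨k, hke, _, _, rfl⟩
    · have hi' : (i = 0 ∨ 1 ≤ mult f i) ∧ b ≤ i ∧ i ≤ a := hi
      obtain ⟨hc, hbi, hia⟩ := hi'
      rcases Nat.even_or_odd i with he | ho
      · exact he
      exfalso
      rcases hc with rfl | hm
      · simp [Nat.odd_iff] at ho
      have hi1 : 1 ≤ i := ho.pos
      have hea : Even a := dsymp_even f hsymp a hp.2.1
      have heb : Even b := dsymp_even f hsymp b hp.2.2.1
      have hbi' : b < i := by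
        rcases lt_or_eq_of_le hbi with h | h
        · exact h
        · exfalso
          rw [← h] at ho
          exact (Nat.not_even_iff_odd.mpr ho) heb
      have hia' : i < a := by
        rcases lt_or_eq_of_le hia with h | h
        · exact h
        · exfalso
          rw [h] at ho
          exact (Nat.not_even_iff_odd.mpr ho) hea
      have hseq2 : OddSet f ∩ Set.Ioi i = OddSet f ∩ Set.Ioi b := by
        ext x
        simp only [Set.mem_inter_iff, Set.mem_Ioi]
        constructor
        · rintro ⟨hx, hxi⟩
          exact ⟨hx, by omega⟩
        · rintro ⟨hx, hxb⟩
          refine ⟨hx, ?_⟩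
          by_contra hxi
          have hmem : x ∈ Dsymp f ∩ Set.Ioo b a := ⟨Or.inl hx, hxb, by omega⟩
          rw [hp.2.2.2.2] at hmem
          exact hmem
      have hE : Even ((OddSet f ∩ Set.Ioi i).ncard) :=
        (even_NfAux_iff f M hM hmono i).mp (hkey i ho hm)
      have hcnt : ¬ Even ((Dsymp f ∩ Set.Ioi b).ncard) := paired_count_odd f hmono a b hp
      rw [dsymp_ioi f b, ← hseq2] at hcnt
      exact hcnt hE
    · have hik : i ∈ ({k} : Set ℕ) := hi
      rw [Set.mem_singleton_iff] at hik
      rw [hik]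
      exact hke
  refine ⟨part1, ?_, ?_, ?_⟩
  · -- nonempty
    intro Δ hΔ
    rcases hΔ with ⟨a, b, hp, rfl⟩ | ⟨k, _, _, _, rfl⟩
    · refine ⟨a, ?_, le_of_lt hp.1, le_rfl⟩
      rcases (mem_dsymp f a).mp hp.2.1 with h | ⟨h0, _⟩
      · exact Or.inr h.pos
      · exact Or.inl h0
    · exact ⟨k, rfl⟩
  · -- disjoint
    intro Δ Δ' h1 h2 hne
    rw [Set.disjoint_left]
    intro x hx hx'
    rcases h1 with ⟨a, b, hp, rfl⟩ | ⟨k, _, _, hnk, rfl⟩ <;>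
      rcases h2 with ⟨a', b', hp', rfl⟩ | ⟨k', _, _, hnk', rfl⟩
    · have hx1 : (x = 0 ∨ 1 ≤ mult f x) ∧ b ≤ x ∧ x ≤ a := hx
      have hx2 : (x = 0 ∨ 1 ≤ mult f x) ∧ b' ≤ x ∧ x ≤ a' := hx'
      rcases lt_trichotomy a a' with hlt | he | hlt
      · have hsep := pair_sep f hmono a' b' a b hp' hp hlt
        have e1 := hx1.2.2
        have e2 := hx2.2.1
        omega
      · subst he
        have hbb := pair_b_eq f a b b' hp hp'
        exact hne (by rw [hbb])
      · have hsep := pair_sep f hmono a b a' b' hp hp' hlt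
        have e1 := hx1.2.1
        have e2 := hx2.2.2
        omega
    · have hx1 : (x = 0 ∨ 1 ≤ mult f x) ∧ b ≤ x ∧ x ≤ a := hx
      have hk : x = k' := hx'
      exact hnk' ⟨a, b, hp, hk ▸ hx1.2.1, hk ▸ hx1.2.2⟩
    · have hx2 : (x = 0 ∨ 1 ≤ mult f x) ∧ b' ≤ x ∧ x ≤ a' := hx'
      have hk : x = k := hx
      exact hnk ⟨a', b', hp', hk ▸ hx2.2.1, hk ▸ hx2.2.2⟩
    · have e1 : x = k := hx
      have e2 : x = k' := hx'
      exact hne (by rw [← e1, ← e2])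
  · -- union
    ext x
    simp only [Set.mem_sUnion, Set.mem_setOf_eq, Set.mem_union, Set.mem_singleton_iff]
    constructor
    · rintro ⟨Δ, hΔ, hx⟩
      have hev := part1 Δ hΔ x hx
      rcases hΔ with ⟨a, b, hp, rfl⟩ | ⟨k, hke, hk0, _, rfl⟩
      · have hx1 : (x = 0 ∨ 1 ≤ mult f x) ∧ b ≤ x ∧ x ≤ a := hx
        rcases hx1.1 with h0 | hm
        · exact Or.inr h0
        · left
          refine ⟨hev, ?_, hm⟩
          have hx0 : x ≠ 0 := by
            intro h
            rw [h, mult_zero' f M hM] at hm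
            omega
          obtain ⟨t, ht⟩ := hev
          omega
      · have hk : x = k := hx
        subst hk
        rcases hk0 with h0 | ⟨h2, hm⟩
        · exact Or.inr h0
        · exact Or.inl ⟨hke, h2, hm⟩
    · rintro (⟨hev, h2, hm⟩ | rfl)
      · by_cases hex : ∃ a b, PairedS f a b ∧ b ≤ x ∧ x ≤ a
        · obtain ⟨a, b, hp, hb, ha⟩ := hex
          exact ⟨_, Or.inl ⟨a, b, hp, rfl⟩, ⟨Or.inr hm, hb, ha⟩⟩
        · exact ⟨{x}, Or.inr ⟨x, hev, Or.inr ⟨h2, hm⟩, hex, rfl⟩, rfl⟩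
      · by_cases hex : ∃ a b, PairedS f a b ∧ b ≤ 0 ∧ 0 ≤ a
        · obtain ⟨a, b, hp, hb, _⟩ := hex
          exact ⟨_, Or.inl ⟨a, b, hp, rfl⟩, ⟨Or.inl rfl, hb, Nat.zero_le a⟩⟩
        · exact ⟨{0}, Or.inr ⟨0, Even.zero, Or.inl rfl, hex, rfl⟩, rfl⟩

end Wald
end
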